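/- arXiv:1009.1241 — 3 statements merged into one kernel-verified Lean document; each statement's English description precedes it below -/
import Mathlib

section
/- Let T > 0, θ > 0, σ ≥ 0, and let ω > 0 satisfy θ·sin(ωT) + ω·cos(ωT) = 0. Then for every t ∈ [0,T], ∫_0^T (σ²/(2θ))·(exp(−θ|t−s|) − exp(−θ(t+s)))·sin(ωs) ds = (σ²/(ω²+θ²))·sin(ωt). That is, sin(ω·) is an eigenfunction, with eigenvalue σ²/(ω²+θ²), of the integral operator associated with the covariance kernel of the Ornstein–Uhlenbeck process started at 0. -/
open Real MeasureTheory

/-- Antiderivative computation for `exp(a s) sin(ω s)`. -/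
lemma exp_sin_integral (a ω : ℝ) (hω : 0 < ω) (x y : ℝ) :
    ∫ s in x..y, Real.exp (a * s) * Real.sin (ω * s)
      = (Real.exp (a * y) * (a * Real.sin (ω * y) - ω * Real.cos (ω * y))
          - Real.exp (a * x) * (a * Real.sin (ω * x) - ω * Real.cos (ω * x))) / (a ^ 2 + ω ^ 2) := by
  have hne : a ^ 2 + ω ^ 2 ≠ 0 := by positivity
  have key : ∀ s : ℝ, HasDerivAt
      (fun s => Real.exp (a * s) * (a * Real.sin (ω * s) - ω * Real.cos (ω * s)) / (a ^ 2 + ω ^ 2))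
      (Real.exp (a * s) * Real.sin (ω * s)) s := by
    intro s
    have h1 : HasDerivAt (fun s : ℝ => Real.exp (a * s)) (Real.exp (a * s) * a) s := by
      simpa [Function.comp_def] using (Real.hasDerivAt_exp (a * s)).comp s ((hasDerivAt_id s).const_mul a)
    have h2 : HasDerivAt (fun s : ℝ => Real.sin (ω * s)) (Real.cos (ω * s) * ω) s := by
      simpa [Function.comp_def] using (Real.hasDerivAt_sin (ω * s)).comp s ((hasDerivAt_id s).const_mul ω)
    have h3 : HasDerivAt (fun s : ℝ => Real.cos (ω * s)) (-Real.sin (ω * s) * ω) s := by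
      simpa [Function.comp_def] using (Real.hasDerivAt_cos (ω * s)).comp s ((hasDerivAt_id s).const_mul ω)
    have h4 := ((h1.mul ((h2.const_mul a).sub (h3.const_mul ω))).div_const (a ^ 2 + ω ^ 2))
    refine h4.congr_deriv ?_
    show (Real.exp (a * s) * a * (a * Real.sin (ω * s) - ω * Real.cos (ω * s)) + Real.exp (a * s) * (a * (Real.cos (ω * s) * ω) - ω * (-Real.sin (ω * s) * ω))) / (a ^ 2 + ω ^ 2) = Real.exp (a * s) * Real.sin (ω * s)
    rw [div_eq_iff hne]
    ring
  rw [intervalIntegral.integral_eq_sub_of_hasDerivAt (fun s _ => key s)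
    (((Real.continuous_exp.comp (continuous_const.mul continuous_id)).mul
      (Real.continuous_sin.comp (continuous_const.mul continuous_id))).intervalIntegrable x y)]
  ring

/-- Let `T > 0`, `θ > 0`, `σ ≥ 0`, and let `ω > 0` satisfy `θ·sin(ωT) + ω·cos(ωT) = 0`.
Then `sin(ω·)` is an eigenfunction, with eigenvalue `σ²/(ω²+θ²)`, of the integral operator
associated with the covariance kernel
`Γ(t,s) = (σ²/(2θ))(exp(−θ|t−s|) − exp(−θ(t+s)))` of the Ornstein–Uhlenbeck process
started at `0`. -/
theorem ornstein_uhlenbeck_KL_eigenpair (T θ σ ω : ℝ) (hT : 0 < T) (hθ : 0 < θ)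
    (hσ : 0 ≤ σ) (hω : 0 < ω) (heq : θ * Real.sin (ω * T) + ω * Real.cos (ω * T) = 0)
    (t : ℝ) (ht : t ∈ Set.Icc 0 T) :
    ∫ s in (0:ℝ)..T,
        σ^2 / (2 * θ) * (Real.exp (-θ * |t - s|) - Real.exp (-θ * (t + s))) * Real.sin (ω * s)
      = σ^2 / (ω^2 + θ^2) * Real.sin (ω * t) := by
  obtain ⟨ht0, htT⟩ := ht
  have hcont : Continuous fun s : ℝ =>
      σ^2 / (2 * θ) * (Real.exp (-θ * |t - s|) - Real.exp (-θ * (t + s))) * Real.sin (ω * s) := by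
    fun_prop
  have j1 : IntervalIntegrable (fun s : ℝ =>
      σ^2 / (2 * θ) * (Real.exp (-θ * |t - s|) - Real.exp (-θ * (t + s))) * Real.sin (ω * s)) volume 0 t :=
    hcont.intervalIntegrable 0 t
  have j2 : IntervalIntegrable (fun s : ℝ =>
      σ^2 / (2 * θ) * (Real.exp (-θ * |t - s|) - Real.exp (-θ * (t + s))) * Real.sin (ω * s)) volume t T :=
    hcont.intervalIntegrable t T
  have hsplit := (intervalIntegral.integral_add_adjacent_intervals j1 j2).symm
  rw [hsplit]
  have h1 : ∫ s in (0:ℝ)..t,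
      σ^2 / (2 * θ) * (Real.exp (-θ * |t - s|) - Real.exp (-θ * (t + s))) * Real.sin (ω * s)
      = (σ^2 / (2 * θ) * Real.exp (-θ * t)) * (∫ s in (0:ℝ)..t, Real.exp (θ * s) * Real.sin (ω * s))
        - (σ^2 / (2 * θ) * Real.exp (-θ * t)) *
          (∫ s in (0:ℝ)..t, Real.exp (-θ * s) * Real.sin (ω * s)) := by
    have i1 : IntervalIntegrable (fun s : ℝ => σ^2 / (2 * θ) * Real.exp (-θ * t) * (Real.exp (θ * s) * Real.sin (ω * s))) volume 0 t := by
      apply Continuous.intervalIntegrable; fun_prop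
    have i2 : IntervalIntegrable (fun s : ℝ => σ^2 / (2 * θ) * Real.exp (-θ * t) * (Real.exp (-θ * s) * Real.sin (ω * s))) volume 0 t := by
      apply Continuous.intervalIntegrable; fun_prop
    rw [← intervalIntegral.integral_const_mul, ← intervalIntegral.integral_const_mul,
      ← intervalIntegral.integral_sub i1 i2]
    apply intervalIntegral.integral_congr
    intro s hs
    rw [Set.uIcc_of_le ht0] at hs
    have habs : |t - s| = t - s := abs_of_nonneg (by linarith [hs.2])
    simp only [habs, show -θ * (t - s) = -θ * t + θ * s by ring, show -θ * (t + s) = -θ * t + -θ * s by ring,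
      Real.exp_add, Real.exp_add]
    ring
  have h2 : ∫ s in t..T,
      σ^2 / (2 * θ) * (Real.exp (-θ * |t - s|) - Real.exp (-θ * (t + s))) * Real.sin (ω * s)
      = (σ^2 / (2 * θ) * Real.exp (θ * t)) * (∫ s in t..T, Real.exp (-θ * s) * Real.sin (ω * s))
        - (σ^2 / (2 * θ) * Real.exp (-θ * t)) *
          (∫ s in t..T, Real.exp (-θ * s) * Real.sin (ω * s)) := by
    have i1 : IntervalIntegrable (fun s : ℝ => σ^2 / (2 * θ) * Real.exp (θ * t) * (Real.exp (-θ * s) * Real.sin (ω * s))) volume t T := by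
      apply Continuous.intervalIntegrable; fun_prop
    have i2 : IntervalIntegrable (fun s : ℝ => σ^2 / (2 * θ) * Real.exp (-θ * t) * (Real.exp (-θ * s) * Real.sin (ω * s))) volume t T := by
      apply Continuous.intervalIntegrable; fun_prop
    rw [← intervalIntegral.integral_const_mul, ← intervalIntegral.integral_const_mul,
      ← intervalIntegral.integral_sub i1 i2]
    apply intervalIntegral.integral_congr
    intro s hs
    rw [Set.uIcc_of_le htT] at hs
    have habs : |t - s| = s - t := by
      rw [abs_sub_comm]; exact abs_of_nonneg (by linarith [hs.1])
    simp only [habs, show -θ * (s - t) = θ * t + -θ * s by ring, show -θ * (t + s) = -θ * t + -θ * s by ring,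
      Real.exp_add, Real.exp_add]
    ring
  rw [h1, h2, exp_sin_integral θ ω hω, exp_sin_integral (-θ) ω hω, exp_sin_integral (-θ) ω hω]
  have hC : Real.cos (ω * T) = -(θ * Real.sin (ω * T)) / ω := by
    field_simp
    linarith
  have hE : Real.exp (-θ * t) = (Real.exp (θ * t))⁻¹ := by
    rw [← Real.exp_neg]; ring_nf
  rw [hC, hE]
  have hne1 : Real.exp (θ * t) ≠ 0 := Real.exp_ne_zero _
  simp only [mul_zero, Real.exp_zero, Real.sin_zero, Real.cos_zero]
  field_simp
  ring
end

section
/- Let T > 0, θ > 0, σ ≥ 0, and let ω > 0 satisfy 2θω·cos(ωT) + (θ² − ω²)·sin(ωT) = 0. Then the function φ(t) = ω·cos(ωt) + θ·sin(ωt) satisfies, for every t ∈ [0,T], ∫_0^T (σ²/(2θ))·exp(−θ|t−s|)·φ(s) ds = (σ²/(ω²+θ²))·φ(t). That is, φ is an eigenfunction, with eigenvalue σ²/(ω²+θ²), of the integral operator associated with the covariance kernel of the stationary Ornstein–Uhlenbeck process. -/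
open Real MeasureTheory

/-- Let `T > 0`, `θ > 0`, `σ ≥ 0`, and let `ω > 0` satisfy
`2θω·cos(ωT) + (θ² − ω²)·sin(ωT) = 0`. Then `φ(t) = ω·cos(ωt) + θ·sin(ωt)` is an
eigenfunction, with eigenvalue `σ²/(ω²+θ²)`, of the integral operator associated with the
covariance kernel `Γ(t,s) = (σ²/(2θ))e^{−θ|t−s|}` of the stationary Ornstein–Uhlenbeck
process. -/
theorem stationary_ornstein_uhlenbeck_KL_eigenpair (T θ σ ω : ℝ) (hT : 0 < T) (hθ : 0 < θ)
    (hσ : 0 ≤ σ) (hω : 0 < ω)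
    (heq : 2 * θ * ω * Real.cos (ω * T) + (θ^2 - ω^2) * Real.sin (ω * T) = 0)
    (t : ℝ) (ht : t ∈ Set.Icc 0 T) :
    ∫ s in (0:ℝ)..T,
        σ^2 / (2 * θ) * Real.exp (-θ * |t - s|) *
          (ω * Real.cos (ω * s) + θ * Real.sin (ω * s))
      = σ^2 / (ω^2 + θ^2) * (ω * Real.cos (ω * t) + θ * Real.sin (ω * t)) := by
  obtain ⟨ht0, htT⟩ := ht
  have hD : (0:ℝ) < θ^2 + ω^2 := by positivity
  have hcont : ∀ a b : ℝ, IntervalIntegrable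
      (fun s => σ^2 / (2 * θ) * Real.exp (-θ * |t - s|) *
        (ω * Real.cos (ω * s) + θ * Real.sin (ω * s))) volume a b := by
    intro a b
    apply Continuous.intervalIntegrable
    fun_prop
  rw [← intervalIntegral.integral_add_adjacent_intervals (hcont 0 t) (hcont t T)]
  set a : ℝ := -2*θ*ω/(θ^2+ω^2) with ha
  set b : ℝ := (ω^2-θ^2)/(θ^2+ω^2) with hb
  have e1 : -θ * a + b * ω = ω := by
    rw [ha, hb]; field_simp; ring
  have e2 : -θ * b - a * ω = θ := by
    rw [ha, hb]; field_simp; ring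
  have h1 : (∫ s in (0:ℝ)..t, σ^2 / (2 * θ) * Real.exp (-θ * |t - s|) *
        (ω * Real.cos (ω * s) + θ * Real.sin (ω * s)))
      = σ^2 / (2*θ) * Real.sin (ω*t) := by
    have hcongr : (∫ s in (0:ℝ)..t, σ^2 / (2 * θ) * Real.exp (-θ * |t - s|) *
          (ω * Real.cos (ω * s) + θ * Real.sin (ω * s)))
        = ∫ s in (0:ℝ)..t, σ^2 / (2 * θ) * Real.exp (-θ * (t - s)) *
          (ω * Real.cos (ω * s) + θ * Real.sin (ω * s)) := by
      apply intervalIntegral.integral_congr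
      intro s hs
      rw [Set.uIcc_of_le ht0] at hs
      obtain ⟨hs1, hs2⟩ := hs
      simp only
      rw [abs_of_nonneg (by linarith : (0:ℝ) ≤ t - s)]
    rw [hcongr]
    have hft : ∀ x ∈ Set.uIcc (0:ℝ) t, HasDerivAt
        (fun s => σ^2 / (2*θ) * (Real.exp (-θ*(t-s)) * Real.sin (ω*s)))
        (σ^2 / (2 * θ) * Real.exp (-θ * (t - x)) *
          (ω * Real.cos (ω * x) + θ * Real.sin (ω * x))) x := by
      intro x _
      have hu : HasDerivAt (fun s : ℝ => -θ*(t-s)) θ x := by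
        simpa using (((hasDerivAt_id x).const_sub t).const_mul (-θ))
      have hexp := hu.exp
      have hsin : HasDerivAt (fun s : ℝ => Real.sin (ω*s)) (Real.cos (ω*x) * ω) x := by
        simpa using ((hasDerivAt_id x).const_mul ω).sin
      have := (hexp.mul hsin).const_mul (σ^2 / (2*θ))
      refine this.congr_deriv ?_
      ring
    rw [intervalIntegral.integral_eq_sub_of_hasDerivAt hft
      (by apply Continuous.intervalIntegrable; fun_prop)]
    simp
  have h2 : (∫ s in t..T, σ^2 / (2 * θ) * Real.exp (-θ * |t - s|) *
        (ω * Real.cos (ω * s) + θ * Real.sin (ω * s)))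
      = σ^2 / (2*θ) * (Real.exp (-θ*(T-t)) * (a * Real.cos (ω*T) + b * Real.sin (ω*T)))
        - σ^2 / (2*θ) * (Real.exp (-θ*(t-t)) * (a * Real.cos (ω*t) + b * Real.sin (ω*t))) := by
    have hcongr : (∫ s in t..T, σ^2 / (2 * θ) * Real.exp (-θ * |t - s|) *
          (ω * Real.cos (ω * s) + θ * Real.sin (ω * s)))
        = ∫ s in t..T, σ^2 / (2 * θ) * Real.exp (-θ * (s - t)) *
          (ω * Real.cos (ω * s) + θ * Real.sin (ω * s)) := by
      apply intervalIntegral.integral_congr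
      intro s hs
      rw [Set.uIcc_of_le htT] at hs
      obtain ⟨hs1, hs2⟩ := hs
      simp only
      rw [abs_of_nonpos (by linarith : t - s ≤ 0), neg_sub]
    rw [hcongr]
    have hft : ∀ x ∈ Set.uIcc t T, HasDerivAt
        (fun s => σ^2 / (2*θ) * (Real.exp (-θ*(s-t)) * (a * Real.cos (ω*s) + b * Real.sin (ω*s))))
        (σ^2 / (2 * θ) * Real.exp (-θ * (x - t)) *
          (ω * Real.cos (ω * x) + θ * Real.sin (ω * x))) x := by
      intro x _
      have hu : HasDerivAt (fun s : ℝ => -θ*(s-t)) (-θ) x := by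
        simpa using (((hasDerivAt_id x).sub_const t).const_mul (-θ))
      have hexp := hu.exp
      have hsin : HasDerivAt (fun s : ℝ => b * Real.sin (ω*s)) (b * (Real.cos (ω*x) * ω)) x := by
        simpa using (((hasDerivAt_id x).const_mul ω).sin).const_mul b
      have hcos : HasDerivAt (fun s : ℝ => a * Real.cos (ω*s)) (a * (-Real.sin (ω*x) * ω)) x := by
        simpa using (((hasDerivAt_id x).const_mul ω).cos).const_mul a
      have hder := (hexp.mul (hcos.add hsin)).const_mul (σ^2 / (2*θ))
      refine hder.congr_deriv (Eq.symm ?_)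
      have key : -θ * (a * Real.cos (ω*x) + b * Real.sin (ω*x))
          + (a * (-Real.sin (ω*x) * ω) + b * (Real.cos (ω*x) * ω))
          = ω * Real.cos (ω*x) + θ * Real.sin (ω*x) := by
        linear_combination Real.cos (ω*x) * e1 + Real.sin (ω*x) * e2
      calc σ^2 / (2 * θ) * Real.exp (-θ * (x - t)) *
            (ω * Real.cos (ω * x) + θ * Real.sin (ω * x))
          = σ^2 / (2 * θ) * (Real.exp (-θ * (x - t)) *
            (-θ * (a * Real.cos (ω*x) + b * Real.sin (ω*x))
              + (a * (-Real.sin (ω*x) * ω) + b * (Real.cos (ω*x) * ω)))) := by rw [key]; ring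
        _ = _ := by simp only [Pi.add_apply]; ring
    rw [intervalIntegral.integral_eq_sub_of_hasDerivAt hft
      (by apply Continuous.intervalIntegrable; fun_prop)]
  rw [h1, h2]
  have hzero : a * Real.cos (ω*T) + b * Real.sin (ω*T) = 0 := by
    rw [ha, hb]
    field_simp
    linear_combination -heq
  rw [hzero]
  simp only [mul_zero, zero_sub, sub_self, neg_mul, neg_zero, Real.exp_zero, one_mul]
  rw [ha, hb]
  have hθ' : (2:ℝ) * θ ≠ 0 := by positivity
  field_simp
  ring
end

section
/- Let H ∈ (0,1), 0 ≤ t < T, and let s > 0, K > 0, σ > 0, r ∈ ℝ. Set v = T^{2H} − t^{2H} > 0, d₁ = (ln(s/K) + r(T−t) + (σ²/2)·v)/(σ·√v) and d₂ = (ln(s/K) + r(T−t) − (σ²/2)·v)/(σ·√v). Then, with Z a standard Gaussian random variable and Φ the standard normal cumulative distribution function, e^{−r(T−t)}·𝔼[ max( s·exp(σ·√v·Z + r(T−t) − (σ²/2)·v) − K, 0 ) ] = s·Φ(d₁) − K·e^{−r(T−t)}·Φ(d₂). -/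
open Real MeasureTheory ProbabilityTheory
open scoped NNReal ENNReal

lemma tilt (a b z : ℝ) :
    Real.exp (a * z + b) * gaussianPDFReal 0 1 z
      = Real.exp (b + a ^ 2 / 2) * gaussianPDFReal a 1 z := by
  simp only [gaussianPDFReal, NNReal.coe_one, mul_one, sub_zero]
  rw [mul_comm (Real.exp (a*z+b)), mul_assoc, ← Real.exp_add,
      mul_comm (Real.exp (b + a^2/2)), mul_assoc, ← Real.exp_add]
  ring_nf

lemma gint (f : ℝ → ℝ) {S : Set ℝ} (hS : MeasurableSet S) :
    ∫ z in S, f z ∂(gaussianReal 0 1) = ∫ z in S, f z * gaussianPDFReal 0 1 z := by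
  rw [gaussianReal_of_var_ne_zero 0 one_ne_zero, restrict_withDensity hS]
  have h : gaussianPDF 0 1 = fun x => ((Real.toNNReal (gaussianPDFReal 0 1 x) : ℝ≥0) : ℝ≥0∞) := by
    funext x; rfl
  rw [h, integral_withDensity_eq_integral_smul (measurable_gaussianPDFReal 0 1).real_toNNReal]
  congr 1; funext x
  rw [NNReal.smul_def, smul_eq_mul, Real.coe_toNNReal _ (gaussianPDFReal_nonneg _ _ _), mul_comm]

lemma gmeasIci (m x : ℝ) :
    (((gaussianReal m 1)) (Set.Ici x)).toReal = ∫ z in Set.Ici x, gaussianPDFReal m 1 z := by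
  rw [gaussianReal_apply_eq_integral m one_ne_zero,
    ENNReal.toReal_ofReal (setIntegral_nonneg measurableSet_Ici fun z _ => gaussianPDFReal_nonneg m 1 z)]

lemma gsym (x : ℝ) : (gaussianReal 0 1) (Set.Ici x) = (gaussianReal 0 1) (Set.Iic (-x)) := by
  have h : (gaussianReal 0 1).map (fun z => (-1 : ℝ) * z) = gaussianReal 0 1 := by
    rw [gaussianReal_map_const_mul]
    norm_num
  nth_rewrite 2 [← h]
  rw [Measure.map_apply (by fun_prop) measurableSet_Iic]
  congr 1
  ext z
  simp only [Set.mem_preimage, Set.mem_Iic, Set.mem_Ici]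
  constructor <;> intro hz <;> linarith

lemma gshift (m x : ℝ) :
    (gaussianReal m 1) (Set.Ici x) = (gaussianReal 0 1) (Set.Ici (x - m)) := by
  have h := gaussianReal_map_add_const (μ := 0) (v := 1) m
  rw [zero_add] at h
  rw [← h, Measure.map_apply (measurable_add_const m) measurableSet_Ici]
  congr 1
  ext z
  simp only [Set.mem_preimage, Set.mem_Ici]
  constructor <;> intro hz <;> linarith

lemma gintegrable (a b : ℝ) :
    Integrable (fun z => Real.exp (a * z + b)) (gaussianReal 0 1) := by
  rw [gaussianReal_of_var_ne_zero 0 one_ne_zero,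
    integrable_withDensity_iff (measurable_gaussianPDF 0 1)
      (ae_of_all _ fun x => ENNReal.ofReal_lt_top)]
  have h : (fun x => Real.exp (a * x + b) * (gaussianPDF 0 1 x).toReal)
      = fun x => Real.exp (b + a ^ 2 / 2) * gaussianPDFReal a 1 x := by
    funext x
    rw [gaussianPDF, ENNReal.toReal_ofReal (gaussianPDFReal_nonneg _ _ _), tilt]
  rw [h]
  exact (integrable_gaussianPDFReal a 1).const_mul _

/-- Fractional Black–Scholes formula: with `v = T^{2H} − t^{2H} > 0` and `Z` a standard
Gaussian random variable, the discounted expectation of the call payoff equals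
`s·Φ(d₁) − K·e^{−r(T−t)}·Φ(d₂)`, where `Φ` is the standard normal cumulative
distribution function. -/
theorem fractional_black_scholes_formula (H : ℝ) (hH : H ∈ Set.Ioo (0:ℝ) 1)
    (t T : ℝ) (ht : 0 ≤ t) (htT : t < T)
    (s K σ : ℝ) (hs : 0 < s) (hK : 0 < K) (hσ : 0 < σ) (r : ℝ) :
    0 < T ^ (2 * H) - t ^ (2 * H) ∧
    Real.exp (-r * (T - t)) *
        (∫ z, max (s * Real.exp (σ * Real.sqrt (T ^ (2 * H) - t ^ (2 * H)) * z
              + r * (T - t) - σ^2 / 2 * (T ^ (2 * H) - t ^ (2 * H))) - K) 0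
          ∂(gaussianReal 0 1))
      = s * ((gaussianReal 0 1) (Set.Iic
              ((Real.log (s / K) + r * (T - t)
                  + σ^2 / 2 * (T ^ (2 * H) - t ^ (2 * H)))
                / (σ * Real.sqrt (T ^ (2 * H) - t ^ (2 * H)))))).toReal
        - K * Real.exp (-r * (T - t)) *
            ((gaussianReal 0 1) (Set.Iic
              ((Real.log (s / K) + r * (T - t)
                  - σ^2 / 2 * (T ^ (2 * H) - t ^ (2 * H)))
                / (σ * Real.sqrt (T ^ (2 * H) - t ^ (2 * H)))))).toReal := by
  have h2H : 0 < 2 * H := by nlinarith [hH.1]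
  set v : ℝ := T ^ (2 * H) - t ^ (2 * H) with hv_def
  have hv : 0 < v := by
    have : t ^ (2 * H) < T ^ (2 * H) := Real.rpow_lt_rpow ht htT h2H
    simpa [hv_def, sub_pos] using this
  refine ⟨hv, ?_⟩
  rw [neg_mul]
  set a : ℝ := σ * Real.sqrt v with ha_def
  have ha : 0 < a := mul_pos hσ (Real.sqrt_pos.mpr hv)
  set c : ℝ := r * (T - t) with hc_def
  set w : ℝ := σ ^ 2 / 2 * v with hw_def
  have hw : a ^ 2 = 2 * w := by
    rw [ha_def, hw_def, mul_pow, Real.sq_sqrt hv.le]; ring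
  set d1 : ℝ := (Real.log (s / K) + c + w) / a with hd1_def
  set d2 : ℝ := (Real.log (s / K) + c - w) / a with hd2_def
  have had2 : a * d2 = Real.log (s / K) + c - w := by
    rw [hd2_def]; field_simp
  have hd12 : d2 + a = d1 := by
    rw [hd1_def, hd2_def]; field_simp; linear_combination hw
  set γ : Measure ℝ := gaussianReal 0 1 with hγ_def
  -- criterion for the payoff to be positive
  have hcrit : ∀ z : ℝ, 0 ≤ s * Real.exp (a * z + c - w) - K ↔ -d2 ≤ z := by
    intro z
    rw [sub_nonneg, mul_comm s, ← div_le_iff₀ hs,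
      ← Real.log_le_iff_le_exp (by positivity), Real.log_div hK.ne' hs.ne']
    constructor
    · intro h
      have h2 : a * (-d2) ≤ a * z := by
        rw [mul_neg, had2, Real.log_div hs.ne' hK.ne']
        linarith
      exact le_of_mul_le_mul_left h2 ha
    · intro h
      have h2 : a * (-d2) ≤ a * z := mul_le_mul_of_nonneg_left h ha.le
      rw [mul_neg, had2, Real.log_div hs.ne' hK.ne'] at h2
      linarith
  have hind : (fun z => max (s * Real.exp (a * z + c - w) - K) 0)
      = Set.indicator (Set.Ici (-d2)) (fun z => s * Real.exp (a * z + c - w) - K) := by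
    funext z
    by_cases hz : z ∈ Set.Ici (-d2)
    · rw [Set.indicator_of_mem hz]
      exact max_eq_left ((hcrit z).mpr hz)
    · rw [Set.indicator_of_notMem hz]
      exact max_eq_right (le_of_not_ge fun h0 => hz ((hcrit z).mp h0))
  have hInt1 : Integrable (fun z => s * Real.exp (a * z + c - w)) γ := by
    have := (gintegrable a (c - w)).const_mul s
    simpa [mul_assoc, add_sub_assoc] using this
  -- the first set integral
  have hfirst : ∫ z in Set.Ici (-d2), s * Real.exp (a * z + c - w) ∂γ
      = s * Real.exp c * (γ (Set.Iic d1)).toReal := by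
    rw [hγ_def, gint _ measurableSet_Ici]
    have hpt : ∀ z : ℝ, s * Real.exp (a * z + c - w) * gaussianPDFReal 0 1 z
        = s * Real.exp c * gaussianPDFReal a 1 z := by
      intro z
      have := tilt a (c - w) z
      rw [add_sub_assoc]
      rw [mul_assoc, this]
      have : c - w + a ^ 2 / 2 = c := by linarith [hw]
      rw [this, ← mul_assoc]
    rw [setIntegral_congr_fun measurableSet_Ici fun z _ => hpt z,
      integral_const_mul, ← gmeasIci]
    rw [gshift, gsym]
    congr 2
    rw [← hd12]; ring
  -- the second set integral
  have hsecond : ∫ _ in Set.Ici (-d2), K ∂γ = (γ (Set.Iic d2)).toReal * K := by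
    rw [setIntegral_const, smul_eq_mul, measureReal_def, hγ_def, gsym, neg_neg]
  calc Real.exp (-c) * ∫ z, max (s * Real.exp (a * z + c - w) - K) 0 ∂γ
      = Real.exp (-c) * ∫ z in Set.Ici (-d2), (s * Real.exp (a * z + c - w) - K) ∂γ := by
        rw [hind, integral_indicator measurableSet_Ici]
    _ = Real.exp (-c) * (s * Real.exp c * (γ (Set.Iic d1)).toReal
          - (γ (Set.Iic d2)).toReal * K) := by
        rw [integral_sub (hInt1.restrict) (integrable_const K), hfirst, hsecond]
    _ = s * (γ (Set.Iic d1)).toReal - K * Real.exp (-c) * (γ (Set.Iic d2)).toReal := by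
        have h1 : Real.exp (-c) * Real.exp c = 1 := by
          rw [← Real.exp_add]; simp
        linear_combination (s * (γ (Set.Iic d1)).toReal) * h1
end
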